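/- arXiv:2004.04217 — 2 statements merged into one kernel-verified Lean document; each statement's English description precedes it below -/
import Mathlib

section
/- Let ψ: ℝ³ → ℝ be a smooth compactly supported function and let i, j ∈ {1,2,3}. Then there exists a constant C > 0, independent of ψ, such that for every a > 0 the iterated integral ∫₀^{a} (1/r) ∫_{S²} (3 y_i y_j − δ_{ij}) · ψ(r y) dσ(y) dr exists (the inner function of r is integrable on (0,a]) and its absolute value is bounded by C · a · sup_{x ∈ ℝ³} |∇ψ(x)|, where δ_{ij} is the Kronecker symbol. -/
open MeasureTheory Real Filter

noncomputable section

abbrev E3 := EuclideanSpace ℝ (Fin 3)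

namespace SigmaAux

lemma abs_sin_sub (a b : ℝ) : |Real.sin a - Real.sin b| ≤ |a - b| := by
  rw [Real.sin_sub_sin]
  calc |2 * Real.sin ((a - b) / 2) * Real.cos ((a + b) / 2)|
      = 2 * |Real.sin ((a - b) / 2)| * |Real.cos ((a + b) / 2)| := by
        rw [abs_mul, abs_mul, abs_two]
    _ ≤ 2 * |(a - b) / 2| * 1 := by
        have h1 : |Real.sin ((a - b) / 2)| ≤ |(a - b) / 2| := Real.abs_sin_le_abs
        have h2 : |Real.cos ((a + b) / 2)| ≤ 1 := Real.abs_cos_le_one _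
        nlinarith [abs_nonneg (Real.sin ((a - b) / 2)), abs_nonneg ((a - b) / 2),
          abs_nonneg (Real.cos ((a + b) / 2))]
    _ = |a - b| := by rw [abs_div, abs_two]; ring

lemma abs_cos_sub (a b : ℝ) : |Real.cos a - Real.cos b| ≤ |a - b| := by
  rw [Real.cos_sub_cos]
  calc |-2 * Real.sin ((a + b) / 2) * Real.sin ((a - b) / 2)|
      = 2 * |Real.sin ((a + b) / 2)| * |Real.sin ((a - b) / 2)| := by
        rw [abs_mul, abs_mul, abs_neg, abs_two]
    _ ≤ 2 * 1 * |(a - b) / 2| := by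
        have h1 : |Real.sin ((a - b) / 2)| ≤ |(a - b) / 2| := Real.abs_sin_le_abs
        have h2 : |Real.sin ((a + b) / 2)| ≤ 1 := Real.abs_sin_le_one _
        nlinarith [abs_nonneg (Real.sin ((a - b) / 2)), abs_nonneg ((a - b) / 2),
          abs_nonneg (Real.sin ((a + b) / 2))]
    _ = |a - b| := by rw [abs_div, abs_two]; ring

lemma abs_mul_sub_mul (a b c d : ℝ) (hb : |b| ≤ 1) (hc : |c| ≤ 1) :
    |a * b - c * d| ≤ |a - c| + |b - d| := by
  have : a * b - c * d = (a - c) * b + c * (b - d) := by ring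
  rw [this]
  calc |(a - c) * b + c * (b - d)| ≤ |(a - c) * b| + |c * (b - d)| := abs_add_le _ _
    _ = |a - c| * |b| + |c| * |b - d| := by rw [abs_mul, abs_mul]
    _ ≤ |a - c| * 1 + 1 * |b - d| := by gcongr
    _ = |a - c| + |b - d| := by ring

/-- spherical coordinates parametrization -/
def sph (p : ℝ × ℝ) : E3 :=
  (WithLp.equiv 2 (Fin 3 → ℝ)).symm ![Real.cos p.1 * Real.cos p.2,
    Real.sin p.1 * Real.cos p.2, Real.sin p.2]

lemma sph_lipschitz : LipschitzWith 4 sph := by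
  apply LipschitzWith.of_dist_le_mul
  intro p q
  have hd1 : |p.1 - q.1| ≤ dist p q := by
    rw [Prod.dist_eq, ← Real.dist_eq]; exact le_max_left _ _
  have hd2 : |p.2 - q.2| ≤ dist p q := by
    rw [Prod.dist_eq, ← Real.dist_eq]; exact le_max_right _ _
  have key : ∀ k : Fin 3, dist (sph p k) (sph q k) ≤ 2 * dist p q := by
    intro k
    fin_cases k
    · show dist (Real.cos p.1 * Real.cos p.2) (Real.cos q.1 * Real.cos q.2) ≤ _
      rw [Real.dist_eq]
      calc |Real.cos p.1 * Real.cos p.2 - Real.cos q.1 * Real.cos q.2|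
          ≤ |Real.cos p.1 - Real.cos q.1| + |Real.cos p.2 - Real.cos q.2| :=
            abs_mul_sub_mul _ _ _ _ (Real.abs_cos_le_one _) (Real.abs_cos_le_one _)
        _ ≤ |p.1 - q.1| + |p.2 - q.2| := add_le_add (abs_cos_sub _ _) (abs_cos_sub _ _)
        _ ≤ dist p q + dist p q := add_le_add hd1 hd2
        _ = 2 * dist p q := by ring
    · show dist (Real.sin p.1 * Real.cos p.2) (Real.sin q.1 * Real.cos q.2) ≤ _
      rw [Real.dist_eq]
      calc |Real.sin p.1 * Real.cos p.2 - Real.sin q.1 * Real.cos q.2|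
          ≤ |Real.sin p.1 - Real.sin q.1| + |Real.cos p.2 - Real.cos q.2| :=
            abs_mul_sub_mul _ _ _ _ (Real.abs_cos_le_one _) (Real.abs_sin_le_one _)
        _ ≤ |p.1 - q.1| + |p.2 - q.2| := add_le_add (abs_sin_sub _ _) (abs_cos_sub _ _)
        _ ≤ dist p q + dist p q := add_le_add hd1 hd2
        _ = 2 * dist p q := by ring
    · show dist (Real.sin p.2) (Real.sin q.2) ≤ _
      rw [Real.dist_eq]
      calc |Real.sin p.2 - Real.sin q.2| ≤ |p.2 - q.2| := abs_sin_sub _ _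
        _ ≤ dist p q := hd2
        _ ≤ 2 * dist p q := by nlinarith [dist_nonneg (x := p) (y := q)]
  have hdnn : (0:ℝ) ≤ dist p q := dist_nonneg
  rw [EuclideanSpace.dist_eq]
  have hsum : ∑ k : Fin 3, dist (sph p k) (sph q k) ^ 2 ≤ (4 * dist p q) ^ 2 := by
    have : ∀ k : Fin 3, dist (sph p k) (sph q k) ^ 2 ≤ (2 * dist p q) ^ 2 := fun k =>
      pow_le_pow_left₀ dist_nonneg (key k) 2
    calc ∑ k : Fin 3, dist (sph p k) (sph q k) ^ 2
        ≤ ∑ _k : Fin 3, (2 * dist p q) ^ 2 := Finset.sum_le_sum fun k _ => this k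
      _ = 3 * (2 * dist p q) ^ 2 := by simp [Finset.sum_const]
      _ ≤ (4 * dist p q) ^ 2 := by nlinarith
  calc √(∑ k : Fin 3, dist (sph p k) (sph q k) ^ 2) ≤ √((4 * dist p q) ^ 2) :=
        Real.sqrt_le_sqrt hsum
    _ = 4 * dist p q := Real.sqrt_sq (by positivity)
    _ = (4:NNReal) * dist p q := by norm_num

lemma sph_surj : Metric.sphere (0 : E3) 1 ⊆
    sph '' (Set.Icc (-π) π ×ˢ Set.Icc (-π) π) := by
  intro y hy
  have hy1 : ‖y‖ = 1 := by simpa using hy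
  have hsum : y 0 ^ 2 + y 1 ^ 2 + y 2 ^ 2 = 1 := by
    have := EuclideanSpace.norm_eq y
    rw [hy1] at this
    have h2 : √(∑ k : Fin 3, ‖y k‖ ^ 2) = 1 := this.symm
    have h3 : ∑ k : Fin 3, ‖y k‖ ^ 2 = 1 := by
      have := congrArg (fun t => t ^ 2) h2
      simpa [Real.sq_sqrt (Finset.sum_nonneg fun k _ => sq_nonneg _)] using this
    simpa [Fin.sum_univ_three, Real.norm_eq_abs, sq_abs] using h3
  set c := Real.sqrt (y 0 ^ 2 + y 1 ^ 2) with hc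
  have hcnn : 0 ≤ c := Real.sqrt_nonneg _
  have hcsq : c ^ 2 = y 0 ^ 2 + y 1 ^ 2 := Real.sq_sqrt (by positivity)
  have hy2sq : y 2 ^ 2 ≤ 1 := by nlinarith [sq_nonneg (y 0), sq_nonneg (y 1)]
  have hy2a : -1 ≤ y 2 := by nlinarith [sq_nonneg (y 2 + 1)]
  have hy2b : y 2 ≤ 1 := by nlinarith [sq_nonneg (y 2 - 1)]
  have hpi : (0:ℝ) < π := Real.pi_pos
  set φ := Real.arcsin (y 2) with hφ
  have hφmem : φ ∈ Set.Icc (-π) π := by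
    have h1 := Real.arcsin_mem_Icc (y 2)
    constructor <;> [linarith [h1.1]; linarith [h1.2]]
  have hsinφ : Real.sin φ = y 2 := Real.sin_arcsin hy2a hy2b
  have hcosφ : Real.cos φ = c := by
    rw [hφ, Real.cos_arcsin]
    congr 1
    linarith
  by_cases hc0 : c = 0
  · have h00 : y 0 ^ 2 + y 1 ^ 2 = 0 := by
      have := hcsq; rw [hc0] at this; linarith
    have h0 : y 0 = 0 := by nlinarith [sq_nonneg (y 0), sq_nonneg (y 1)]
    have h1 : y 1 = 0 := by nlinarith [sq_nonneg (y 0), sq_nonneg (y 1)]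
    refine ⟨(0, φ), ⟨⟨neg_nonpos.mpr hpi.le, hpi.le⟩, hφmem⟩, ?_⟩
    ext k
    fin_cases k <;>
      simp [sph, hsinφ, hcosφ, hc0, h0, h1]
  · have hcpos : 0 < c := lt_of_le_of_ne hcnn (Ne.symm hc0)
    set A := y 0 / c with hA
    set B := y 1 / c with hB
    have hAB : A ^ 2 + B ^ 2 = 1 := by
      rw [hA, hB, div_pow, div_pow, ← add_div, ← hcsq]
      exact div_self (by positivity)
    have hA1 : -1 ≤ A := by nlinarith [sq_nonneg (A + 1), sq_nonneg B]
    have hA2 : A ≤ 1 := by nlinarith [sq_nonneg (A - 1), sq_nonneg B]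
    set θ := if 0 ≤ y 1 then Real.arccos A else -Real.arccos A with hθ
    have hθmem : θ ∈ Set.Icc (-π) π := by
      have h1 := Real.arccos_nonneg A
      have h2 := Real.arccos_le_pi A
      rw [hθ]
      split_ifs <;> constructor <;> linarith
    have hcosθ : Real.cos θ = A := by
      rw [hθ]; split_ifs <;> simp [Real.cos_arccos hA1 hA2]
    have hsinθ : Real.sin θ = B := by
      have habs : Real.sin (Real.arccos A) = Real.sqrt (1 - A ^ 2) := Real.sin_arccos A
      have hBsq : Real.sqrt (1 - A ^ 2) = |B| := by
        rw [show (1 : ℝ) - A ^ 2 = B ^ 2 by linarith, Real.sqrt_sq_eq_abs]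
      rw [hθ]
      split_ifs with h
      · have : 0 ≤ B := div_nonneg h hcnn
        rw [habs, hBsq, abs_of_nonneg this]
      · push_neg at h
        have : B < 0 := div_neg_of_neg_of_pos h hcpos
        rw [Real.sin_neg, habs, hBsq, abs_of_neg this]; ring
    refine ⟨(θ, φ), ⟨hθmem, hφmem⟩, ?_⟩
    ext k
    have e0 : A * c = y 0 := by rw [hA]; exact div_mul_cancel₀ _ hc0
    have e1 : B * c = y 1 := by rw [hB]; exact div_mul_cancel₀ _ hc0
    fin_cases k <;>
      simp [sph, hsinφ, hcosφ, hcosθ, hsinθ, e0, e1]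

notation "S2" => Metric.sphere (0 : E3) 1

lemma sphere_meas : MeasurableSet S2 := Metric.isClosed_sphere.measurableSet

lemma sphere_finite : μH[2] S2 < ⊤ := by
  calc μH[2] S2 ≤ μH[2] (sph '' (Set.Icc (-π) π ×ˢ Set.Icc (-π) π)) :=
        measure_mono sph_surj
    _ ≤ (4:NNReal) ^ (2:ℝ) * μH[2] (Set.Icc (-π) π ×ˢ Set.Icc (-π) π) :=
        sph_lipschitz.hausdorffMeasure_image_le (by norm_num) _
    _ < ⊤ := by
        rw [hausdorffMeasure_prod_real]
        exact ENNReal.mul_lt_top (ENNReal.rpow_lt_top_of_nonneg (by norm_num) ENNReal.coe_ne_top)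
          (isCompact_Icc.prod isCompact_Icc).measure_lt_top

lemma integral_comp_isometry (e : E3 ≃ₗᵢ[ℝ] E3) (g : E3 → ℝ) :
    ∫ y in S2, g (e y) ∂μH[2] = ∫ y in S2, g y ∂μH[2] := by
  have hpre : e ⁻¹' S2 = S2 := by
    ext y
    simp [Metric.mem_sphere, dist_eq_norm, e.norm_map]
  have hmp : MeasurePreserving e μH[2] μH[2] :=
    e.toIsometryEquiv.measurePreserving_hausdorffMeasure 2
  have hemb : MeasurableEmbedding e := e.toHomeomorph.measurableEmbedding
  have := hmp.setIntegral_preimage_emb hemb g S2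
  rw [hpre] at this
  exact this

lemma cont_coord (k : Fin 3) : Continuous fun y : E3 => y k :=
  (EuclideanSpace.proj k : E3 →L[ℝ] ℝ).continuous

lemma sphere_coord_sum {y : E3} (hy : y ∈ S2) : ∑ k : Fin 3, y k ^ 2 = 1 := by
  have hy1 : ‖y‖ = 1 := by simpa using hy
  have h := EuclideanSpace.norm_eq y
  have hnn : 0 ≤ ∑ k : Fin 3, ‖y k‖ ^ 2 := Finset.sum_nonneg fun k _ => sq_nonneg _
  have h2 : ∑ k : Fin 3, ‖y k‖ ^ 2 = 1 := by
    have hs : √(∑ k : Fin 3, ‖y k‖ ^ 2) = 1 := by rw [← h, hy1]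
    nlinarith [Real.sq_sqrt hnn]
  simpa [Real.norm_eq_abs, sq_abs] using h2

lemma sphere_coord_sq_le {y : E3} (hy : y ∈ S2) (k : Fin 3) : y k ^ 2 ≤ 1 := by
  have h := sphere_coord_sum hy
  have h2 := Finset.single_le_sum (f := fun l : Fin 3 => y l ^ 2)
    (fun l _ => sq_nonneg (y l)) (Finset.mem_univ k)
  rw [h] at h2
  exact h2

lemma sphere_coord_le {y : E3} (hy : y ∈ S2) (k : Fin 3) : |y k| ≤ 1 := by
  have h := sphere_coord_sq_le hy k
  nlinarith [abs_nonneg (y k), sq_abs (y k)]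

lemma integrableOn_sphere_of_bound {g : E3 → ℝ} (hg : Continuous g) {c : ℝ}
    (hb : ∀ y ∈ S2, |g y| ≤ c) : IntegrableOn g S2 μH[2] := by
  have hconst : IntegrableOn (fun _ : E3 => c) S2 μH[2] :=
    integrableOn_const sphere_finite.ne
  exact Integrable.mono' hconst hg.aestronglyMeasurable.restrict
    ((ae_restrict_iff' sphere_meas).2 (ae_of_all _ fun y hy => by
      simpa [Real.norm_eq_abs] using hb y hy))

lemma mean_zero (i j : Fin 3) :
    (∫ y in S2, (3 * y i * y j - (if i = j then 1 else 0)) ∂μH[2]) = 0 := by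
  by_cases hij : i = j
  · subst hij
    simp only [eq_self_iff_true, if_true]
    have hI : ∀ k : Fin 3, IntegrableOn (fun y : E3 => y k ^ 2) S2 μH[2] := fun k =>
      integrableOn_sphere_of_bound ((cont_coord k).pow 2)
        (fun y hy => by
          rw [abs_of_nonneg (sq_nonneg _)]
          exact sphere_coord_sq_le hy k)
    have heq : ∀ k : Fin 3, (∫ y in S2, y k ^ 2 ∂μH[2]) = ∫ y in S2, y i ^ 2 ∂μH[2] := by
      intro k
      have h := integral_comp_isometry (LinearIsometryEquiv.piLpCongrLeft 2 ℝ ℝ (Equiv.swap i k))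
        (fun y : E3 => y i ^ 2)
      have happ : ∀ y : E3,
          (LinearIsometryEquiv.piLpCongrLeft 2 ℝ ℝ (Equiv.swap i k) y) i = y k := by
        intro y
        show y ((Equiv.swap i k).symm i) = y k
        rw [Equiv.symm_swap, Equiv.swap_apply_left]
      rw [← h]
      refine integral_congr_ae (ae_of_all _ fun y => ?_)
      show y k ^ 2 = (LinearIsometryEquiv.piLpCongrLeft 2 ℝ ℝ (Equiv.swap i k) y) i ^ 2
      rw [happ y]
    have hsum3 : ∑ k : Fin 3, (∫ y in S2, y k ^ 2 ∂μH[2]) = (μH[2] S2).toReal := by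
      rw [← integral_finset_sum _ (fun k _ => hI k)]
      have h1 : (∫ y in S2, (∑ k : Fin 3, y k ^ 2) ∂μH[2]) = ∫ _y in S2, (1:ℝ) ∂μH[2] :=
        setIntegral_congr_fun sphere_meas fun y hy => sphere_coord_sum hy
      rw [h1, setIntegral_const, smul_eq_mul, mul_one]; rfl
    have h3 : 3 * (∫ y in S2, y i ^ 2 ∂μH[2]) = (μH[2] S2).toReal := by
      rw [← hsum3, Fin.sum_univ_three, heq 0, heq 1, heq 2]
      ring
    have hint1 : IntegrableOn (fun _ : E3 => (1:ℝ)) S2 μH[2] :=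
      integrableOn_const sphere_finite.ne
    have hrw : (∫ y in S2, (3 * y i * y i - 1) ∂μH[2])
        = (∫ y in S2, 3 * y i ^ 2 ∂μH[2]) - ∫ _y in S2, (1:ℝ) ∂μH[2] := by
      rw [← integral_sub ((hI i).const_mul 3) hint1]
      refine integral_congr_ae (ae_of_all _ fun y => ?_)
      show 3 * y i * y i - 1 = 3 * y i ^ 2 - 1
      ring
    rw [hrw, MeasureTheory.integral_const_mul, h3, setIntegral_const, smul_eq_mul, mul_one, ← measureReal_def, sub_self]
  · simp only [if_neg hij, sub_zero]
    set e : E3 ≃ₗᵢ[ℝ] E3 := LinearIsometryEquiv.piLpCongrRight 2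
      (fun k => if k = i then LinearIsometryEquiv.neg ℝ else LinearIsometryEquiv.refl ℝ ℝ) with he
    have happi : ∀ y : E3, e y i = -y i := by
      intro y
      show (if i = i then LinearIsometryEquiv.neg ℝ else LinearIsometryEquiv.refl ℝ ℝ) (y i) = -y i
      rw [if_pos rfl]
      rfl
    have happj : ∀ y : E3, e y j = y j := by
      intro y
      show (if j = i then LinearIsometryEquiv.neg ℝ else LinearIsometryEquiv.refl ℝ ℝ) (y j) = y j
      rw [if_neg (fun hc => hij hc.symm)]
      rfl
    have h := integral_comp_isometry e (fun y : E3 => 3 * y i * y j)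
    have hneg : (∫ y in S2, 3 * (e y) i * (e y) j ∂μH[2])
        = ∫ y in S2, -(3 * y i * y j) ∂μH[2] := by
      refine integral_congr_ae (ae_of_all _ fun y => ?_)
      show 3 * (e y) i * (e y) j = -(3 * y i * y j)
      rw [happi y, happj y]
      ring
    rw [show (fun y : E3 => 3 * (e y) i * (e y) j) = (fun y : E3 => (fun z : E3 => 3 * z i * z j) (e y)) from rfl] at hneg
    rw [hneg, integral_neg] at h
    linarith

lemma abs_h_le {y : E3} (hy : y ∈ S2) (i j : Fin 3) :
    |3 * y i * y j - (if i = j then 1 else 0)| ≤ 4 := by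
  have h1 := sphere_coord_le hy i
  have h2 := sphere_coord_le hy j
  have hm : |y i * y j| ≤ 1 := by
    rw [abs_mul]
    exact mul_le_one₀ h1 (abs_nonneg _) h2
  have h3 : |3 * y i * y j| ≤ 3 := by
    rw [mul_assoc, abs_mul, abs_of_nonneg (by norm_num : (0:ℝ) ≤ 3)]
    nlinarith
  have hd : |(if i = j then (1:ℝ) else 0)| ≤ 1 := by split_ifs <;> simp
  calc |3 * y i * y j - (if i = j then 1 else 0)|
      ≤ |3 * y i * y j| + |(if i = j then (1:ℝ) else 0)| := abs_sub _ _
    _ ≤ 3 + 1 := add_le_add h3 hd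
    _ = 4 := by norm_num

end SigmaAux

open SigmaAux in
/-- existence and a bound for the integral
`∫₀^a (1/r) ∫_{S²} (3 yᵢ yⱼ - δᵢⱼ) ψ(r y) dσ(y) dr`, uniform in `ψ`. -/
theorem sigma_integral_exists_and_bounded (i j : Fin 3) :
    ∃ C > (0:ℝ), ∀ ψ : E3 → ℝ, ContDiff ℝ (⊤ : ℕ∞) ψ → HasCompactSupport ψ →
      ∀ a > (0:ℝ),
        IntegrableOn (fun r : ℝ => r⁻¹ *
            ∫ y in Metric.sphere (0 : E3) 1,
              (3 * y i * y j - (if i = j then 1 else 0)) * ψ (r • y) ∂(μH[2]))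
          (Set.Ioc 0 a) ∧
        |∫ r in Set.Ioc (0:ℝ) a, r⁻¹ *
            ∫ y in Metric.sphere (0 : E3) 1,
              (3 * y i * y j - (if i = j then 1 else 0)) * ψ (r • y) ∂(μH[2])|
          ≤ C * a * ⨆ x : E3, ‖gradient ψ x‖ := by
  set μS := (μH[2] S2).toReal with hμS
  have hμSnn : 0 ≤ μS := ENNReal.toReal_nonneg
  refine ⟨4 * μS + 1, by positivity, ?_⟩
  intro ψ hψ hψc a ha
  set h : E3 → ℝ := fun y => 3 * y i * y j - (if i = j then 1 else 0) with hh
  have hhcont : Continuous h := by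
    apply Continuous.sub
    · exact (continuous_const.mul (cont_coord i)).mul (cont_coord j)
    · exact continuous_const
  have hhbd : ∀ y ∈ S2, |h y| ≤ 4 := fun y hy => abs_h_le hy i j
  have hmean : (∫ y in S2, h y ∂μH[2]) = 0 := mean_zero i j
  have hhint : IntegrableOn h S2 μH[2] := integrableOn_sphere_of_bound hhcont hhbd
  -- bounds on ψ and its gradient
  obtain ⟨Cψ, hCψ⟩ := hψc.exists_bound_of_continuous hψ.continuous
  set M := ⨆ x : E3, ‖gradient ψ x‖ with hM
  have hgradnorm : ∀ x : E3, ‖gradient ψ x‖ = ‖fderiv ℝ ψ x‖ := fun x =>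
    ((InnerProductSpace.toDual ℝ E3).symm :
      (E3 →L[ℝ] ℝ) ≃ₗᵢ[ℝ] E3).norm_map (fderiv ℝ ψ x)
  obtain ⟨C0, hC0⟩ := (hψc.fderiv (𝕜 := ℝ)).exists_bound_of_continuous
    (hψ.continuous_fderiv (by simp))
  have hbdd : BddAbove (Set.range fun x : E3 => ‖gradient ψ x‖) := by
    refine ⟨C0, ?_⟩
    rintro t ⟨x, rfl⟩
    show ‖gradient ψ x‖ ≤ C0
    rw [hgradnorm x]
    simpa using hC0 x
  have hMnn : 0 ≤ M := (norm_nonneg (gradient ψ 0)).trans (le_ciSup hbdd 0)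
  have hfd : ∀ x : E3, ‖fderiv ℝ ψ x‖ ≤ M := fun x => (hgradnorm x) ▸ le_ciSup hbdd x
  have hlip : ∀ x : E3, |ψ x - ψ 0| ≤ M * ‖x‖ := by
    intro x
    have := (convex_univ : Convex ℝ (Set.univ : Set E3)).norm_image_sub_le_of_norm_fderiv_le
      (fun y _ => (hψ.differentiable (by simp)).differentiableAt) (fun y _ => hfd y)
      (Set.mem_univ 0) (Set.mem_univ x)
    simpa [Real.norm_eq_abs] using this
  -- the inner integral as a function of r
  set g : ℝ → ℝ := fun r => ∫ y in S2, h y * ψ (r • y) ∂μH[2] with hg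
  have hcontrm : ∀ r : ℝ, Continuous fun y : E3 => h y * ψ (r • y) := fun r =>
    hhcont.mul (hψ.continuous.comp (continuous_const_smul r))
  have hgcont : Continuous g := by
    refine continuous_of_dominated (bound := fun _ : E3 => 4 * Cψ)
      (fun r => (hcontrm r).aestronglyMeasurable.restrict) (fun r => ?_)
      (integrableOn_const sphere_finite.ne) ?_
    · refine (ae_restrict_iff' sphere_meas).2 (ae_of_all _ fun y hy => ?_)
      show ‖h y * ψ (r • y)‖ ≤ 4 * Cψ
      rw [Real.norm_eq_abs, abs_mul]
      have hb1 := hhbd y hy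
      have hb2 := hCψ (r • y)
      rw [Real.norm_eq_abs] at hb2
      have hCψ0 : 0 ≤ Cψ := (norm_nonneg (ψ 0)).trans (hCψ 0)
      nlinarith [abs_nonneg (h y), abs_nonneg (ψ (r • y))]
    · refine ae_of_all _ fun y => ?_
      exact continuous_const.mul (hψ.continuous.comp (continuous_id.smul continuous_const))
  have hbound_g : ∀ r ∈ Set.Ioc (0:ℝ) a, |g r| ≤ 4 * (M * r) * μS := by
    intro r hr
    have hr0 : 0 < r := hr.1
    have hpt : ∀ y ∈ S2, |h y * (ψ (r • y) - ψ 0)| ≤ 4 * (M * r) := by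
      intro y hy
      have hynorm : ‖y‖ = 1 := by simpa using hy
      have h1 := hhbd y hy
      have h2 : |ψ (r • y) - ψ 0| ≤ M * r := by
        have := hlip (r • y)
        rwa [norm_smul, hynorm, mul_one, Real.norm_eq_abs, abs_of_pos hr0] at this
      rw [abs_mul]
      nlinarith [abs_nonneg (h y), abs_nonneg (ψ (r • y) - ψ 0)]
    have hint1 : IntegrableOn (fun y : E3 => h y * (ψ (r • y) - ψ 0)) S2 μH[2] :=
      integrableOn_sphere_of_bound
        (hhcont.mul ((hψ.continuous.comp (continuous_const_smul r)).sub continuous_const)) hpt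
    have hsplit : g r = ∫ y in S2, h y * (ψ (r • y) - ψ 0) ∂μH[2] := by
      have heq : (fun y : E3 => h y * ψ (r • y))
          = fun y : E3 => h y * (ψ (r • y) - ψ 0) + ψ 0 * h y := by
        funext y; ring
      rw [hg]
      show (∫ y in S2, h y * ψ (r • y) ∂μH[2]) = _
      rw [heq, integral_add hint1 (hhint.const_mul (ψ 0)),
        MeasureTheory.integral_const_mul, hmean, mul_zero, add_zero]
    rw [hsplit, ← Real.norm_eq_abs]
    exact norm_setIntegral_le_of_norm_le_const
      (f := fun y : E3 => h y * (ψ (r • y) - ψ 0)) sphere_finite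
      (fun y hy => by rw [Real.norm_eq_abs]; exact hpt y hy)
  have hb2 : ∀ r ∈ Set.Ioc (0:ℝ) a, ‖r⁻¹ * g r‖ ≤ 4 * μS * M := by
    intro r hr
    have hr0 : 0 < r := hr.1
    rw [Real.norm_eq_abs, abs_mul, abs_inv, abs_of_pos hr0]
    have hgb := hbound_g r hr
    calc r⁻¹ * |g r| ≤ r⁻¹ * (4 * (M * r) * μS) := by
          apply mul_le_mul_of_nonneg_left hgb (by positivity)
      _ = 4 * μS * M := by field_simp
  have hmeasF : AEStronglyMeasurable (fun r : ℝ => r⁻¹ * g r)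
      (volume.restrict (Set.Ioc 0 a)) :=
    ((measurable_inv.mul hgcont.measurable).aestronglyMeasurable).restrict
  have hInt : IntegrableOn (fun r : ℝ => r⁻¹ * g r) (Set.Ioc 0 a) volume := by
    refine Integrable.mono' (g := fun _ => 4 * μS * M)
      (integrableOn_const measure_Ioc_lt_top.ne) hmeasF
      ((ae_restrict_iff' measurableSet_Ioc).2 (ae_of_all _ hb2))
  have hgoal_eq : (fun r : ℝ => r⁻¹ *
      ∫ y in Metric.sphere (0 : E3) 1,
        (3 * y i * y j - (if i = j then 1 else 0)) * ψ (r • y) ∂(μH[2]))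
      = fun r : ℝ => r⁻¹ * g r := rfl
  rw [hgoal_eq]
  refine ⟨hInt, ?_⟩
  have hfinal := norm_setIntegral_le_of_norm_le_const (μ := volume) (f := fun r => r⁻¹ * g r)
    measure_Ioc_lt_top hb2
  rw [Real.norm_eq_abs] at hfinal  -- not needed maybe
  have hvol : (volume (Set.Ioc (0:ℝ) a)).toReal = a := by
    rw [Real.volume_Ioc]
    simp [ENNReal.toReal_ofReal ha.le]
  rw [measureReal_def, hvol] at hfinal
  calc |∫ r in Set.Ioc (0:ℝ) a, r⁻¹ * g r| ≤ 4 * μS * M * a := hfinal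
    _ ≤ (4 * μS + 1) * a * M := by nlinarith
end
end

section
/- Let f: ℝ³ → ℝ be C², let x ∈ ℝ³ and r > 0. Then r² · ∫_{S²} y · ∇f(x + r y) dσ(y) = ∫₀^{r} s² · ∫_{S²} Δf(x + s y) dσ(y) ds, where Δ is the Laplacian on ℝ³. -/
/-! Everything rests on the rotation invariance of the surface measure `σ`: for a skew-adjoint
`A` the flow `exp (t • A)` preserves `σ`, so `∫ Dg(y) (A y) dσ = 0`. Applied to `g = y_j w` and
the rotations of the `(e_j, e_i)`-planes, and summed over `j`, this yields the spherical
integration by parts `∫ ∂_i w dσ = ∫ y_i (∂_r w + (n - 1) w) dσ`. Taking `w = ∂_i f (x + s ·)`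
and summing over `i` identifies `s^(n-1) ∫ Δf(x + s y) dσ` with the `s`-derivative of
`s^(n-1) ∫ y · ∇f(x + s y) dσ`; integrating in `s` gives the theorem. -/

open MeasureTheory Real Filter

noncomputable section

/-- Laplacian of a scalar function on `ℝ³`. -/
def lap (f : E3 → ℝ) (x : E3) : ℝ :=
  ∑ i : Fin 3, fderiv ℝ (fun y => fderiv ℝ f y (EuclideanSpace.single i 1)) x
    (EuclideanSpace.single i 1)

open scoped RealInnerProductSpace

section Integrability

variable {X : Type*} [TopologicalSpace X] [MeasurableSpace X] [OpensMeasurableSpace X]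
  {μ : Measure X} [IsFiniteMeasure μ] {K : Set X}

theorem Continuous.integrable_of_ae_mem_of_isCompact {F : X → ℝ} (hF : Continuous F)
    (hK : IsCompact K) (hμK : ∀ᵐ x ∂μ, x ∈ K) : Integrable F μ := by
  obtain ⟨C, hC⟩ := hK.exists_bound_of_continuousOn hF.continuousOn
  exact .of_bound hF.aestronglyMeasurable C (hμK.mono hC)

theorem intervalIntegral_integral_swap_of_continuous [SecondCountableTopology X]
    (hK : IsCompact K) (hμK : ∀ᵐ x ∂μ, x ∈ K) {F : ℝ → X → ℝ}
    (hF : Continuous (Function.uncurry F)) (a b : ℝ) :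
    ∫ t in a..b, ∫ x, F t x ∂μ = ∫ x, (∫ t in a..b, F t x) ∂μ := by
  have : IsFiniteMeasure (volume.restrict (Set.uIoc a b)) := isFiniteMeasure_restrict.2
    ((measure_mono Set.uIoc_subset_uIcc).trans_lt isCompact_uIcc.measure_lt_top).ne
  refine intervalIntegral_integral_swap
    (hF.integrable_of_ae_mem_of_isCompact ((isCompact_uIcc (a := a) (b := b)).prod hK) ?_)
  have ht : ∀ᵐ t ∂(volume.restrict (Set.uIoc a b)), t ∈ Set.uIcc a b :=
    (ae_restrict_mem measurableSet_uIoc).mono fun _ h => Set.uIoc_subset_uIcc h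
  exact (Measure.quasiMeasurePreserving_fst.ae ht).and (Measure.quasiMeasurePreserving_snd.ae hμK)

end Integrability

section InnerProductSpace

variable {ι E : Type*} [Fintype ι] [NormedAddCommGroup E] [InnerProductSpace ℝ E]

def rotationGenerator (u v : E) : E →L[ℝ] E :=
  (innerSL ℝ u).smulRight v - (innerSL ℝ v).smulRight u

theorem rotationGenerator_apply (u v y : E) :
    rotationGenerator u v y = ⟪u, y⟫ • v - ⟪v, y⟫ • u := rfl

theorem rotationGenerator_mem_skewAdjoint [CompleteSpace E] (u v : E) :
    rotationGenerator u v ∈ skewAdjoint (E →L[ℝ] E) := by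
  rw [skewAdjoint.mem_iff, ContinuousLinearMap.star_eq_adjoint, eq_comm,
    ContinuousLinearMap.eq_adjoint_iff]
  intro y z
  simp only [neg_apply, rotationGenerator_apply, inner_neg_left, inner_sub_left, inner_sub_right,
    inner_smul_left, inner_smul_right, conj_trivial]
  rw [real_inner_comm y u, real_inner_comm y v]
  ring

namespace OrthonormalBasis

variable (b : OrthonormalBasis ι ℝ E)

theorem sum_inner_mul_apply (L : E →L[ℝ] ℝ) (y : E) : ∑ j, ⟪b j, y⟫ * L (b j) = L y := by
  conv_rhs => rw [← b.sum_repr' y]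
  simp [map_sum, smul_eq_mul]

theorem sum_fderiv_inner_mul_rotationGenerator {w : E → ℝ} {y : E} (hw : DifferentiableAt ℝ w y)
    (hy : ‖y‖ = 1) (i : ι) :
    ∑ j, fderiv ℝ (fun z => ⟪b j, z⟫ * w z) y (rotationGenerator (b j) (b i) y) =
      fderiv ℝ w y (b i) - ⟪b i, y⟫ * (fderiv ℝ w y y + (Fintype.card ι - 1) * w y) := by
  have hfderiv (j : ι) (h : E) :
      fderiv ℝ (fun z => ⟪b j, z⟫ * w z) y h = ⟪b j, y⟫ * fderiv ℝ w y h + w y * ⟪b j, h⟫ := by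
    have : HasFDerivAt (fun z => ⟪b j, z⟫ * w z)
        (⟪b j, y⟫ • fderiv ℝ w y + w y • innerSL ℝ (b j)) y :=
      (innerSL ℝ (b j)).hasFDerivAt.mul hw.hasFDerivAt
    rw [this.fderiv]
    simp [smul_eq_mul]
  have hyy : ∑ j, ⟪b j, y⟫ * ⟪b j, y⟫ = 1 := by
    calc _ = ⟪y, y⟫ := by
          rw [← b.sum_inner_mul_inner]
          exact Finset.sum_congr rfl fun j _ => by rw [real_inner_comm y (b j)]
      _ = 1 := by rw [real_inner_self_eq_norm_sq, hy, one_pow]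
  have hiy : ∑ j, ⟪b j, y⟫ * ⟪b j, b i⟫ = ⟪b i, y⟫ := by
    rw [← b.sum_inner_mul_inner]
    exact Finset.sum_congr rfl fun j _ => by rw [mul_comm, real_inner_comm (b i)]
  calc _ = ∑ j, (fderiv ℝ w y (b i) * (⟪b j, y⟫ * ⟪b j, y⟫)
          - ⟪b i, y⟫ * (⟪b j, y⟫ * fderiv ℝ w y (b j))
          + w y * (⟪b j, y⟫ * ⟪b j, b i⟫) - ⟪b i, y⟫ * w y) := by
        refine Finset.sum_congr rfl fun j _ => ?_
        rw [hfderiv, rotationGenerator_apply, map_sub, map_smul, map_smul, inner_sub_right,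
          inner_smul_right, inner_smul_right, real_inner_self_eq_norm_sq, b.orthonormal.1 j]
        simp only [smul_eq_mul]
        ring
    _ = _ := by
        simp only [Finset.sum_sub_distrib, Finset.sum_add_distrib, ← Finset.mul_sum, hyy, hiy,
          b.sum_inner_mul_apply, Finset.sum_const, Finset.card_univ, nsmul_eq_mul]
        ring

end OrthonormalBasis

open Laplacian in
theorem InnerProductSpace.laplacian_eq_sum_fderiv_fderiv [FiniteDimensional ℝ E] {F : Type*}
    [NormedAddCommGroup F] [NormedSpace ℝ F] (b : OrthonormalBasis ι ℝ E) (f : E → F) (x : E) :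
    Δ f x = ∑ i, fderiv ℝ (fderiv ℝ f) x (b i) (b i) := by
  simp [laplacian_eq_iteratedFDeriv_orthonormalBasis f b, iteratedFDeriv_two_apply]

end InnerProductSpace

section SphereMeasure

variable {ι E : Type*} [Fintype ι] [NormedAddCommGroup E] [InnerProductSpace ℝ E]
  [MeasurableSpace E] [BorelSpace E]

structure IsRotationInvariantSphereMeasure (ν : Measure E) : Prop where
  ae_mem_sphere : ∀ᵐ y ∂ν, y ∈ Metric.sphere (0 : E) 1
  measurePreserving (e : E ≃ₗᵢ[ℝ] E) : MeasurePreserving e ν ν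

theorem isRotationInvariantSphereMeasure_hausdorffMeasure (d : ℝ) :
    IsRotationInvariantSphereMeasure ((μH[d] : Measure E).restrict (Metric.sphere 0 1)) where
  ae_mem_sphere := ae_restrict_mem Metric.isClosed_sphere.measurableSet
  measurePreserving e := by
    simpa [e.preimage_sphere] using (e.toIsometryEquiv.measurePreserving_hausdorffMeasure d
      |>.restrict_preimage (s := Metric.sphere 0 1) Metric.isClosed_sphere.measurableSet)

namespace IsRotationInvariantSphereMeasure

open Laplacian Module

variable {ν : Measure E}

theorem integral_comp (hν : IsRotationInvariantSphereMeasure ν) (e : E ≃ₗᵢ[ℝ] E) (F : E → ℝ) :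
    ∫ y, F (e y) ∂ν = ∫ y, F y ∂ν :=
  (hν.measurePreserving e).integral_comp e.toHomeomorph.measurableEmbedding F

variable [FiniteDimensional ℝ E] [IsFiniteMeasure ν]

theorem integrable_of_continuous (hν : IsRotationInvariantSphereMeasure ν) {F : E → ℝ}
    (hF : Continuous F) : Integrable F ν :=
  hF.integrable_of_ae_mem_of_isCompact (isCompact_sphere 0 1) hν.ae_mem_sphere

open NormedSpace in
theorem integral_fderiv_apply_skewAdjoint (hν : IsRotationInvariantSphereMeasure ν)
    {A : E →L[ℝ] E} (hA : A ∈ skewAdjoint (E →L[ℝ] E)) {g : E → ℝ} (hg : ContDiff ℝ 1 g) :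
    ∫ y, fderiv ℝ g y (A y) ∂ν = 0 := by
  let +nondep : NormedAlgebra ℚ (E →L[ℝ] E) := .restrictScalars ℚ ℝ _
  set φ : E → ℝ := fun y => fderiv ℝ g y (A y)
  have hφ : Continuous φ := (hg.continuous_fderiv one_ne_zero).clm_apply A.continuous
  let R (t : ℝ) : E ≃ₗᵢ[ℝ] E := Unitary.linearIsometryEquiv
    ⟨exp (t • A), exp_mem_unitary_of_mem_skewAdjoint (skewAdjoint.smul_mem t hA)⟩
  have hR (t : ℝ) (y : E) : R t y = exp (t • A) y := rfl
  have hRcont : Continuous fun p : ℝ × E => R p.1 p.2 :=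
    (exp_continuous.comp (continuous_fst.smul continuous_const)).clm_apply continuous_snd
  have hderiv (y : E) (t : ℝ) : HasDerivAt (fun t => g (R t y)) (φ (R t y)) t := by
    have hRt : HasDerivAt (fun t => R t y) (A (R t y)) t := by
      simpa [hR] using (hasDerivAt_exp_smul_const' A t).clm_apply (hasDerivAt_const t y)
    exact (hg.differentiable one_ne_zero _).hasFDerivAt.comp_hasDerivAt t hRt
  have hftc (y : E) : ∫ t in (0 : ℝ)..1, φ (R t y) = g (R 1 y) - g y := by
    rw [intervalIntegral.integral_eq_sub_of_hasDerivAt (fun t _ => hderiv y t)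
      ((hφ.comp (hRcont.comp (continuous_id.prodMk continuous_const))).intervalIntegrable 0 1)]
    simp [hR]
  have hgR : Continuous fun y => g (R 1 y) :=
    hg.continuous.comp (hRcont.comp (continuous_const.prodMk continuous_id))
  calc ∫ y, φ y ∂ν = ∫ t in (0 : ℝ)..1, ∫ y, φ (R t y) ∂ν := by simp [hν.integral_comp]
    _ = ∫ y, (∫ t in (0 : ℝ)..1, φ (R t y)) ∂ν :=
      intervalIntegral_integral_swap_of_continuous (isCompact_sphere 0 1) hν.ae_mem_sphere
        (F := fun t y => φ (R t y)) (hφ.comp hRcont) 0 1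
    _ = 0 := by
      simp only [hftc]
      rw [integral_sub (hν.integrable_of_continuous hgR)
        (hν.integrable_of_continuous hg.continuous), hν.integral_comp, sub_self]

theorem integral_fderiv_apply_basis (hν : IsRotationInvariantSphereMeasure ν)
    (b : OrthonormalBasis ι ℝ E) {w : E → ℝ} (hw : ContDiff ℝ 1 w) (i : ι) :
    ∫ y, fderiv ℝ w y (b i) ∂ν =
      ∫ y, ⟪b i, y⟫ * (fderiv ℝ w y y + (Fintype.card ι - 1) * w y) ∂ν := by
  have hg (j : ι) : ContDiff ℝ 1 fun z => ⟪b j, z⟫ * w z := (innerSL ℝ (b j)).contDiff.mul hw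
  have hDw : Continuous (fderiv ℝ w) := hw.continuous_fderiv one_ne_zero
  have hw₀ : Continuous w := hw.continuous
  rw [← sub_eq_zero, ← integral_sub (hν.integrable_of_continuous (by fun_prop))
    (hν.integrable_of_continuous (by fun_prop))]
  calc _ = ∫ y, ∑ j, fderiv ℝ (fun z => ⟪b j, z⟫ * w z) y (rotationGenerator (b j) (b i) y) ∂ν :=
        integral_congr_ae <| hν.ae_mem_sphere.mono fun y hy =>
          (b.sum_fderiv_inner_mul_rotationGenerator (hw.differentiable one_ne_zero y)
            (mem_sphere_zero_iff_norm.1 hy) i).symm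
    _ = ∑ j, ∫ y, fderiv ℝ (fun z => ⟪b j, z⟫ * w z) y (rotationGenerator (b j) (b i) y) ∂ν :=
        integral_finsetSum _ fun j _ => hν.integrable_of_continuous
          (((hg j).continuous_fderiv one_ne_zero).clm_apply (rotationGenerator _ _).continuous)
    _ = 0 := Finset.sum_eq_zero fun j _ =>
        hν.integral_fderiv_apply_skewAdjoint (rotationGenerator_mem_skewAdjoint _ _) (hg j)

theorem integral_sum_fderiv_apply_basis (hν : IsRotationInvariantSphereMeasure ν)
    (b : OrthonormalBasis ι ℝ E) {W : E → E →L[ℝ] ℝ} (hW : ContDiff ℝ 1 W) :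
    ∫ y, ∑ i, fderiv ℝ W y (b i) (b i) ∂ν =
      ∫ y, (fderiv ℝ W y y y + (Fintype.card ι - 1) * W y y) ∂ν := by
  have hWi (i : ι) : ContDiff ℝ 1 fun y => W y (b i) := hW.clm_apply contDiff_const
  have hfderiv (i : ι) (y h : E) : fderiv ℝ (fun y => W y (b i)) y h = fderiv ℝ W y h (b i) := by
    rw [fderiv_clm_apply (hW.differentiable one_ne_zero y) (differentiableAt_const _)]
    simp
  have hDW : Continuous (fderiv ℝ W) := hW.continuous_fderiv one_ne_zero
  have hW₀ : Continuous W := hW.continuous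
  calc ∫ y, ∑ i, fderiv ℝ W y (b i) (b i) ∂ν
      = ∑ i, ∫ y, fderiv ℝ (fun y => W y (b i)) y (b i) ∂ν := by
        simp only [hfderiv]
        exact integral_finsetSum _ fun i _ => hν.integrable_of_continuous (by fun_prop)
    _ = ∑ i, ∫ y, ⟪b i, y⟫ * (fderiv ℝ W y y (b i) + (Fintype.card ι - 1) * W y (b i)) ∂ν := by
        refine Finset.sum_congr rfl fun i _ => ?_
        rw [hν.integral_fderiv_apply_basis b (hWi i)]
        simp only [hfderiv]
    _ = ∫ y, (fderiv ℝ W y y y + (Fintype.card ι - 1) * W y y) ∂ν := by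
        rw [← integral_finsetSum _ fun i _ => hν.integrable_of_continuous (by fun_prop)]
        congr 1 with y
        simp only [mul_add, Finset.sum_add_distrib, mul_left_comm _ ((Fintype.card ι : ℝ) - 1),
          ← Finset.mul_sum, b.sum_inner_mul_apply]

variable {m : ℕ} {f : E → ℝ}

/-- The integrand on the left is `∂ₛ (s ^ (m + 1) * fderiv ℝ f (x + s • y) y)`. -/
theorem integral_radial_deriv_eq (hν : IsRotationInvariantSphereMeasure ν)
    (hm : finrank ℝ E = m + 2) (hf : ContDiff ℝ 2 f) (x : E) (s : ℝ) :
    ∫ y, ((m + 1) * s ^ m * fderiv ℝ f (x + s • y) y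
        + s ^ (m + 1) * fderiv ℝ (fderiv ℝ f) (x + s • y) y y) ∂ν =
      s ^ (m + 1) * ∫ y, Δ f (x + s • y) ∂ν := by
  have hf' : ContDiff ℝ 1 (fderiv ℝ f) := hf.fderiv_right (by norm_num)
  set W : E → E →L[ℝ] ℝ := fun y => fderiv ℝ f (x + s • y)
  have hW : ContDiff ℝ 1 W := hf'.comp (contDiff_const.add (contDiff_const_smul s))
  have hDW (y : E) : fderiv ℝ W y = s • fderiv ℝ (fderiv ℝ f) (x + s • y) := by
    have hline : HasFDerivAt (fun y : E => x + s • y) (s • ContinuousLinearMap.id ℝ E) y :=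
      ((hasFDerivAt_id y).const_smul s).const_add x
    have hcomp : HasFDerivAt W ((fderiv ℝ (fderiv ℝ f) (x + s • y)).comp
        (s • ContinuousLinearMap.id ℝ E)) y :=
      (hf'.differentiable one_ne_zero _).hasFDerivAt.comp y hline
    rw [hcomp.fderiv]
    ext h k
    simp
  have hibp := hν.integral_sum_fderiv_apply_basis (stdOrthonormalBasis ℝ E) hW
  simp only [hDW, smul_apply, smul_eq_mul, ← Finset.mul_sum,
    ← InnerProductSpace.laplacian_eq_sum_fderiv_fderiv, Fintype.card_fin, hm] at hibp
  rw [integral_const_mul] at hibp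
  calc _ = ∫ y, s ^ m * (s * fderiv ℝ (fderiv ℝ f) (x + s • y) y y
        + ((m + 2 : ℕ) - 1) * fderiv ℝ f (x + s • y) y) ∂ν := by
        congr 1 with y
        push_cast
        ring
    _ = s ^ (m + 1) * ∫ y, Δ f (x + s • y) ∂ν := by
        rw [integral_const_mul, ← hibp, pow_succ, mul_assoc]

theorem pow_mul_integral_inner_gradient (hν : IsRotationInvariantSphereMeasure ν)
    (hm : finrank ℝ E = m + 2) (hf : ContDiff ℝ 2 f) (x : E) (r : ℝ) :
    r ^ (m + 1) * ∫ y, ⟪y, gradient f (x + r • y)⟫ ∂ν =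
      ∫ s in (0 : ℝ)..r, s ^ (m + 1) * ∫ y, Δ f (x + s • y) ∂ν := by
  have hf' : ContDiff ℝ 1 (fderiv ℝ f) := hf.fderiv_right (by norm_num)
  have hDf : Continuous (fderiv ℝ f) := hf'.continuous
  have hD2f : Continuous (fderiv ℝ (fderiv ℝ f)) := hf'.continuous_fderiv one_ne_zero
  set F' : ℝ → E → ℝ := fun s y => (m + 1) * s ^ m * fderiv ℝ f (x + s • y) y
    + s ^ (m + 1) * fderiv ℝ (fderiv ℝ f) (x + s • y) y y
  have hF' : Continuous (Function.uncurry F') := by fun_prop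
  have hderiv (y : E) (s : ℝ) :
      HasDerivAt (fun s => s ^ (m + 1) * fderiv ℝ f (x + s • y) y) (F' s y) s := by
    have hline : HasDerivAt (fun s : ℝ => x + s • y) y s := by
      simpa using ((hasDerivAt_id s).smul_const y).const_add x
    have hDf_line := ((hf'.differentiable one_ne_zero _).hasFDerivAt.comp_hasDerivAt s
      hline).clm_apply (hasDerivAt_const s y)
    refine ((hasDerivAt_pow (m + 1) s).fun_mul hDf_line).congr_deriv ?_
    simp only [F', Function.comp_apply, map_zero, add_zero, Nat.add_sub_cancel]
    push_cast
    ring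
  have hftc (y : E) :
      ∫ s in (0 : ℝ)..r, F' s y = r ^ (m + 1) * ⟪y, gradient f (x + r • y)⟫ := by
    rw [intervalIntegral.integral_eq_sub_of_hasDerivAt (fun s _ => hderiv y s)
      ((hF'.comp (continuous_id.prodMk continuous_const)).intervalIntegrable 0 r)]
    simp [inner_gradient_right]
  calc r ^ (m + 1) * ∫ y, ⟪y, gradient f (x + r • y)⟫ ∂ν
      = ∫ y, (∫ s in (0 : ℝ)..r, F' s y) ∂ν := by simp only [hftc, integral_const_mul]
    _ = ∫ s in (0 : ℝ)..r, ∫ y, F' s y ∂ν :=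
        (intervalIntegral_integral_swap_of_continuous (isCompact_sphere 0 1) hν.ae_mem_sphere
          hF' 0 r).symm
    _ = ∫ s in (0 : ℝ)..r, s ^ (m + 1) * ∫ y, Δ f (x + s • y) ∂ν := by
        simp only [F', hν.integral_radial_deriv_eq hm hf]

end IsRotationInvariantSphereMeasure

end SphereMeasure

def sphericalCoord (p : ℝ × ℝ) : E3 := !₂[sin p.1 * cos p.2, sin p.1 * sin p.2, cos p.1]

theorem contDiff_sphericalCoord : ContDiff ℝ 1 sphericalCoord := by
  refine PiLp.contDiff_toLp.comp (contDiff_pi.2 fun i => ?_)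
  fin_cases i <;> simp <;> fun_prop

theorem sphere_subset_image_sphericalCoord :
    Metric.sphere (0 : E3) 1 ⊆ sphericalCoord '' (Set.Icc 0 π ×ˢ Set.Icc (-π) π) := by
  intro y hy
  have hsq : y 0 ^ 2 + y 1 ^ 2 + y 2 ^ 2 = 1 := by
    have := EuclideanSpace.real_norm_sq_eq y
    rw [mem_sphere_zero_iff_norm.1 hy, Fin.sum_univ_three] at this
    linarith
  set z : ℂ := ⟨y 0, y 1⟩
  have hz : sin (arccos (y 2)) = ‖z‖ := by
    rw [sin_arccos, Complex.norm_def, Complex.normSq_mk]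
    congr 1
    linear_combination -hsq
  refine ⟨(arccos (y 2), z.arg), ⟨⟨arccos_nonneg _, arccos_le_pi _⟩,
    (Complex.neg_pi_lt_arg z).le, Complex.arg_le_pi z⟩, ?_⟩
  ext i
  fin_cases i
  · simp [sphericalCoord, hz, Complex.norm_mul_cos_arg, z]
  · simp [sphericalCoord, hz, Complex.norm_mul_sin_arg, z]
  · simp only [sphericalCoord]
    exact cos_arccos (by nlinarith) (by nlinarith)

theorem hausdorffMeasure_sphere_lt_top : μH[2] (Metric.sphere (0 : E3) 1) < ⊤ := by
  have hK : IsCompact (Set.Icc 0 π ×ˢ Set.Icc (-π) π) := isCompact_Icc.prod isCompact_Icc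
  obtain ⟨C, hC⟩ :=
    contDiff_sphericalCoord.locallyLipschitz.locallyLipschitzOn.exists_lipschitzOnWith_of_compact hK
  calc μH[2] (Metric.sphere (0 : E3) 1)
      ≤ μH[2] (sphericalCoord '' (Set.Icc 0 π ×ˢ Set.Icc (-π) π)) :=
        measure_mono sphere_subset_image_sphericalCoord
    _ ≤ C ^ (2 : ℝ) * μH[2] (Set.Icc 0 π ×ˢ Set.Icc (-π) π) :=
        hC.hausdorffMeasure_image_le zero_le_two
    _ < ⊤ := by
        rw [hausdorffMeasure_prod_real]
        exact ENNReal.mul_lt_top (by simp) hK.measure_lt_top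

instance : IsFiniteMeasure ((μH[2] : Measure E3).restrict (Metric.sphere 0 1)) :=
  isFiniteMeasure_restrict.2 hausdorffMeasure_sphere_lt_top.ne

open Laplacian in
theorem lap_eq_laplacian {f : E3 → ℝ} (hf : ContDiff ℝ 2 f) : lap f = Δ f := by
  ext x
  rw [InnerProductSpace.laplacian_eq_sum_fderiv_fderiv (EuclideanSpace.basisFun (Fin 3) ℝ)]
  refine Finset.sum_congr rfl fun i _ => ?_
  rw [EuclideanSpace.basisFun_apply, fderiv_clm_apply
    ((hf.fderiv_right (by norm_num)).differentiable one_ne_zero x) (differentiableAt_const _)]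
  simp

theorem gauss_spherical_mean_general (f : E3 → ℝ) (hf : ContDiff ℝ 2 f)
    (x : E3) (r : ℝ) :
    r ^ 2 * (∫ y in Metric.sphere (0 : E3) 1,
        (inner ℝ y (gradient f (x + r • y)) : ℝ) ∂(μH[2]))
      = ∫ s in (0:ℝ)..r, s ^ 2 *
          ∫ y in Metric.sphere (0 : E3) 1, lap f (x + s • y) ∂(μH[2]) := by
  rw [lap_eq_laplacian hf]
  exact (isRotationInvariantSphereMeasure_hausdorffMeasure 2).pow_mul_integral_inner_gradient
    (m := 1) (by simp) hf x r

/-- Gauss' theorem for spherical means: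
`r² ∫_{S²} y·∇f(x+ry) dσ(y) = ∫₀^r s² ∫_{S²} Δf(x+sy) dσ(y) ds`. -/
theorem gauss_spherical_mean (f : E3 → ℝ) (hf : ContDiff ℝ 2 f)
    (x : E3) (r : ℝ) (hr : 0 < r) :
    r ^ 2 * (∫ y in Metric.sphere (0 : E3) 1,
        (inner ℝ y (gradient f (x + r • y)) : ℝ) ∂(μH[2]))
      = ∫ s in (0:ℝ)..r, s ^ 2 *
          ∫ y in Metric.sphere (0 : E3) 1, lap f (x + s • y) ∂(μH[2]) :=
  gauss_spherical_mean_general f hf x r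
end
end
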